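/- Let (Ω, ℱ, P) be a probability space, ℱ₀ ⊆ ℱ₁ ⊆ … ⊆ ℱ_K ⊆ ℱ a finite filtration, and D a bounded real random variable. For each t ∈ {1,…,K}, let dA(t) : Ω → {0,1} be ℱ_t-measurable with λ(t) := E[dA(t) ∣ ℱ_{t−1}] satisfying c ≤ λ(t) ≤ 1 − c a.s. for some c > 0. Define f_t := E[D·dA(t) ∣ ℱ_{t−1}]/λ(t) − E[D·(1 − dA(t)) ∣ ℱ_{t−1}]/(1 − λ(t)), S := Σ_{t=1}^K f_t·(dA(t) − λ(t)), and D** := D − S. Then: (i) E[S] = 0, so E[D**] = E[D]; (ii) E[(D**)²] = E[D²] − E[S²]; and consequently (iii) Var(D**) ≤ Var(D). Thus estimating or targeting the censoring mechanism can only reduce (never increase) the asymptotic variance relative to using the known censoring weights. -/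

import Mathlib

open MeasureTheory ProbabilityTheory

section CTVRHelpers

variable {Ω : Type*} {mF : MeasurableSpace Ω} {μ : Measure Ω}

/-- a.e.-bounded real function. -/
def CTVR.AEBdd (μ : Measure Ω) (g : Ω → ℝ) : Prop :=
  ∃ C : ℝ, 0 ≤ C ∧ ∀ᵐ ω ∂μ, |g ω| ≤ C

namespace CTVR.AEBdd

lemma of_forall {g : Ω → ℝ} {C : ℝ} (h : ∀ ω, |g ω| ≤ C) : CTVR.AEBdd μ g :=
  ⟨max C 0, le_max_right _ _,
    Filter.Eventually.of_forall fun ω => (h ω).trans (le_max_left _ _)⟩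

lemma mul {g h : Ω → ℝ} (hg : CTVR.AEBdd μ g) (hh : CTVR.AEBdd μ h) :
    CTVR.AEBdd μ (fun ω => g ω * h ω) := by
  obtain ⟨C1, hC1, h1⟩ := hg; obtain ⟨C2, hC2, h2⟩ := hh
  refine ⟨C1 * C2, mul_nonneg hC1 hC2, ?_⟩
  filter_upwards [h1, h2] with ω hg1 hh1
  calc |g ω * h ω| = |g ω| * |h ω| := abs_mul _ _
    _ ≤ C1 * C2 := mul_le_mul hg1 hh1 (abs_nonneg _) hC1

lemma sub {g h : Ω → ℝ} (hg : CTVR.AEBdd μ g) (hh : CTVR.AEBdd μ h) :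
    CTVR.AEBdd μ (fun ω => g ω - h ω) := by
  obtain ⟨C1, hC1, h1⟩ := hg; obtain ⟨C2, hC2, h2⟩ := hh
  refine ⟨C1 + C2, by linarith, ?_⟩
  filter_upwards [h1, h2] with ω hg1 hh1
  calc |g ω - h ω| ≤ |g ω| + |h ω| := abs_sub _ _
    _ ≤ C1 + C2 := add_le_add hg1 hh1

lemma const (C : ℝ) : CTVR.AEBdd μ (fun _ => C) :=
  of_forall (C := |C|) fun _ => le_rfl

lemma sum {ι : Type*} (s : Finset ι) {g : ι → Ω → ℝ}
    (h : ∀ i ∈ s, CTVR.AEBdd μ (g i)) :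
    CTVR.AEBdd μ (fun ω => ∑ i ∈ s, g i ω) := by
  classical
  induction s using Finset.induction_on with
  | empty => exact ⟨0, le_rfl, Filter.Eventually.of_forall fun ω => by simp⟩
  | insert a s hni ih =>
    obtain ⟨C1, hC1, h1⟩ := h a (Finset.mem_insert_self a s)
    obtain ⟨C2, hC2, h2⟩ := ih fun i hi => h i (Finset.mem_insert_of_mem hi)
    refine ⟨C1 + C2, by linarith, ?_⟩
    filter_upwards [h1, h2] with ω hg1 hg2
    rw [Finset.sum_insert hni]
    calc |g a ω + ∑ i ∈ s, g i ω| ≤ |g a ω| + |∑ i ∈ s, g i ω| := abs_add_le _ _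
      _ ≤ C1 + C2 := add_le_add hg1 hg2

lemma condexp {m : MeasurableSpace Ω} {g : Ω → ℝ} (hg : CTVR.AEBdd μ g) :
    CTVR.AEBdd μ (μ[g|m]) := by
  obtain ⟨C, hC0, hC⟩ := hg
  refine ⟨C, hC0, ?_⟩
  have h := ae_bdd_condExp_of_ae_bdd (m := m) (μ := μ) (R := ⟨C, hC0⟩) (f := g)
    hC
  exact h

lemma integrable [IsFiniteMeasure μ] {g : Ω → ℝ}
    (hg : AEStronglyMeasurable g μ) (hb : CTVR.AEBdd μ g) : Integrable g μ := by
  obtain ⟨C, _, hC⟩ := hb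
  exact ⟨hg, HasFiniteIntegral.of_bounded (C := C) (by simpa [Real.norm_eq_abs] using hC)⟩

lemma memℒp [IsFiniteMeasure μ] {g : Ω → ℝ}
    (hg : AEStronglyMeasurable g μ) (hb : CTVR.AEBdd μ g) (p : ENNReal) : MemLp g p μ := by
  obtain ⟨C, _, hC⟩ := hb
  exact MemLp.of_bound hg C (by simpa [Real.norm_eq_abs] using hC)

end CTVR.AEBdd

/-- Pull-out property at the level of integrals. -/
lemma CTVR.pullout [IsProbabilityMeasure μ] {m : MeasurableSpace Ω} (hm : m ≤ mF)
    {g h : Ω → ℝ} (hgm : Measurable[m] g) (hgb : CTVR.AEBdd μ g)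
    (hhm : Measurable[mF] h) (hhb : CTVR.AEBdd μ h) :
    ∫ ω, g ω * h ω ∂μ = ∫ ω, g ω * (μ[h|m]) ω ∂μ := by
  have hgmF : Measurable[mF] g := hgm.mono hm le_rfl
  have hint_h : Integrable h μ := hhb.integrable hhm.aestronglyMeasurable
  have hint_gh : Integrable (g * h) μ :=
    (hgb.mul hhb).integrable (hgmF.mul hhm).aestronglyMeasurable
  have hpull := condExp_mul_of_stronglyMeasurable_left (μ := μ) (m := m)
    hgm.stronglyMeasurable hint_gh hint_h
  calc ∫ ω, g ω * h ω ∂μ = ∫ ω, (μ[g * h|m]) ω ∂μ :=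
        (integral_condExp hm (f := g * h)).symm
    _ = ∫ ω, g ω * (μ[h|m]) ω ∂μ := integral_congr_ae hpull

end CTVRHelpers

/-- Variance reduction from estimating/targeting the censoring mechanism: with
`S = Σ_t f_t·(dA t − λ t)` (the projection of `D` onto the censoring tangent space) and
`D** = D − S`, one has (i) `E[S] = 0` hence `E[D**] = E[D]`,
(ii) `E[(D**)²] = E[D²] − E[S²]`, and consequently (iii) `Var(D**) ≤ Var(D)`. -/
theorem censoring_targeting_variance_reduction
    {Ω : Type*} {mF : MeasurableSpace Ω} (μ : Measure Ω) [IsProbabilityMeasure μ]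
    (K : ℕ) (F : ℕ → MeasurableSpace Ω)
    (hF_mono : Monotone F) (hF_le : ∀ t, F t ≤ mF)
    (dA : ℕ → Ω → ℝ)
    (hdA_meas : ∀ t ∈ Finset.Icc 1 K, Measurable[F t] (dA t))
    (hdA01 : ∀ t ∈ Finset.Icc 1 K, ∀ ω, dA t ω = 0 ∨ dA t ω = 1)
    (c : ℝ) (hc : 0 < c)
    (hlam : ∀ t ∈ Finset.Icc 1 K, ∀ᵐ ω ∂μ,
      c ≤ (μ[dA t | F (t - 1)]) ω ∧ (μ[dA t | F (t - 1)]) ω ≤ 1 - c)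
    (D : Ω → ℝ) (hD_meas : Measurable D) (hD_bdd : ∃ C : ℝ, ∀ ω, |D ω| ≤ C)
    (f : ℕ → Ω → ℝ)
    (hf : ∀ t ∈ Finset.Icc 1 K, ∀ ω, f t ω =
      (μ[(fun ω' => D ω' * dA t ω') | F (t - 1)]) ω / (μ[dA t | F (t - 1)]) ω
        - (μ[(fun ω' => D ω' * (1 - dA t ω')) | F (t - 1)]) ω
            / (1 - (μ[dA t | F (t - 1)]) ω))
    (S Dss : Ω → ℝ)
    (hS : ∀ ω, S ω = ∑ t ∈ Finset.Icc 1 K, f t ω * (dA t ω - (μ[dA t | F (t - 1)]) ω))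
    (hDss : ∀ ω, Dss ω = D ω - S ω) :
    (∫ ω, S ω ∂μ = 0 ∧ ∫ ω, Dss ω ∂μ = ∫ ω, D ω ∂μ) ∧
    (∫ ω, (Dss ω) ^ 2 ∂μ = ∫ ω, (D ω) ^ 2 ∂μ - ∫ ω, (S ω) ^ 2 ∂μ) ∧
    variance Dss μ ≤ variance D μ := by
  classical
  obtain ⟨C, hC⟩ := hD_bdd
  set I := Finset.Icc 1 K with hI
  -- abbreviations
  set T : ℕ → Ω → ℝ := fun t ω => f t ω * (dA t ω - (μ[dA t | F (t - 1)]) ω) with hT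
  -- basic boundedness
  have hDb : CTVR.AEBdd μ D := CTVR.AEBdd.of_forall hC
  have hdAb : ∀ t ∈ I, CTVR.AEBdd μ (dA t) := fun t ht =>
    CTVR.AEBdd.of_forall (C := 1) fun ω => by rcases hdA01 t ht ω with h | h <;> simp [h]
  have hdAmF : ∀ t ∈ I, Measurable (dA t) := fun t ht =>
    (hdA_meas t ht).mono (hF_le t) le_rfl
  have hlamm : ∀ t : ℕ, Measurable[F (t - 1)] (μ[dA t | F (t - 1)]) := fun t =>
    stronglyMeasurable_condExp.measurable
  have hlammF : ∀ t : ℕ, Measurable (μ[dA t | F (t - 1)]) := fun t =>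
    (hlamm t).mono (hF_le (t - 1)) le_rfl
  have hlamb : ∀ t ∈ I, CTVR.AEBdd μ (μ[dA t | F (t - 1)]) := fun t ht =>
    (hdAb t ht).condexp
  have hAm : ∀ t : ℕ, Measurable[F (t - 1)] (μ[(fun ω' => D ω' * dA t ω') | F (t - 1)]) :=
    fun t => stronglyMeasurable_condExp.measurable
  have hBm : ∀ t : ℕ,
      Measurable[F (t - 1)] (μ[(fun ω' => D ω' * (1 - dA t ω')) | F (t - 1)]) :=
    fun t => stronglyMeasurable_condExp.measurable
  have hDdAb : ∀ t ∈ I, CTVR.AEBdd μ (fun ω' => D ω' * dA t ω') := fun t ht =>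
    hDb.mul (hdAb t ht)
  have hDdAb' : ∀ t ∈ I, CTVR.AEBdd μ (fun ω' => D ω' * (1 - dA t ω')) := fun t ht =>
    hDb.mul ((CTVR.AEBdd.const 1).sub (hdAb t ht))
  have hAb : ∀ t ∈ I, CTVR.AEBdd μ (μ[(fun ω' => D ω' * dA t ω') | F (t - 1)]) :=
    fun t ht => (hDdAb t ht).condexp
  have hBb : ∀ t ∈ I, CTVR.AEBdd μ (μ[(fun ω' => D ω' * (1 - dA t ω')) | F (t - 1)]) :=
    fun t ht => (hDdAb' t ht).condexp
  -- measurability and boundedness of f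
  have hfm : ∀ t ∈ I, Measurable[F (t - 1)] (f t) := by
    intro t ht
    rw [funext (hf t ht)]
    exact ((hAm t).div (hlamm t)).sub ((hBm t).div (measurable_const.sub (hlamm t)))
  have hfb : ∀ t ∈ I, CTVR.AEBdd μ (f t) := by
    intro t ht
    obtain ⟨Ca, hCa0, hCa⟩ := hAb t ht
    obtain ⟨Cb, hCb0, hCb⟩ := hBb t ht
    refine ⟨Ca / c + Cb / c, by positivity, ?_⟩
    filter_upwards [hCa, hCb, hlam t ht] with ω h1 h2 h3
    obtain ⟨h3a, h3b⟩ := h3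
    have hl0 : 0 < (μ[dA t | F (t - 1)]) ω := lt_of_lt_of_le hc h3a
    have hl1 : 0 < 1 - (μ[dA t | F (t - 1)]) ω := by linarith
    rw [hf t ht ω]
    have e1 : |(μ[(fun ω' => D ω' * dA t ω') | F (t - 1)]) ω / (μ[dA t | F (t - 1)]) ω|
        ≤ Ca / c := by
      rw [abs_div, abs_of_pos hl0]
      exact div_le_div₀ hCa0 h1 hc h3a
    have e2 : |(μ[(fun ω' => D ω' * (1 - dA t ω')) | F (t - 1)]) ω
        / (1 - (μ[dA t | F (t - 1)]) ω)| ≤ Cb / c := by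
      rw [abs_div, abs_of_pos hl1]
      exact div_le_div₀ hCb0 h2 hc (by linarith)
    calc |(μ[(fun ω' => D ω' * dA t ω') | F (t - 1)]) ω / (μ[dA t | F (t - 1)]) ω
          - (μ[(fun ω' => D ω' * (1 - dA t ω')) | F (t - 1)]) ω
            / (1 - (μ[dA t | F (t - 1)]) ω)|
        ≤ _ + _ := abs_sub _ _
      _ ≤ Ca / c + Cb / c := add_le_add e1 e2
  have hfmF : ∀ t ∈ I, Measurable (f t) := fun t ht =>
    (hfm t ht).mono (hF_le (t - 1)) le_rfl
  -- facts about T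
  have hTm : ∀ t ∈ I, Measurable (T t) := fun t ht =>
    (hfmF t ht).mul ((hdAmF t ht).sub (hlammF t))
  have hTb : ∀ t ∈ I, CTVR.AEBdd μ (T t) := fun t ht =>
    (hfb t ht).mul ((hdAb t ht).sub (hlamb t ht))
  have hTint : ∀ t ∈ I, Integrable (T t) μ := fun t ht =>
    (hTb t ht).integrable (hTm t ht).aestronglyMeasurable
  -- key orthogonality lemma
  have key : ∀ s ∈ I, ∀ g : Ω → ℝ, Measurable[F (s - 1)] g → CTVR.AEBdd μ g →
      ∫ ω, g ω * (dA s ω - (μ[dA s | F (s - 1)]) ω) ∂μ = 0 := by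
    intro s hs g hgm hgb
    have hgmF : Measurable g := hgm.mono (hF_le (s - 1)) le_rfl
    have i1 : Integrable (fun ω => g ω * dA s ω) μ :=
      (hgb.mul (hdAb s hs)).integrable (hgmF.mul (hdAmF s hs)).aestronglyMeasurable
    have i2 : Integrable (fun ω => g ω * (μ[dA s | F (s - 1)]) ω) μ :=
      (hgb.mul (hlamb s hs)).integrable (hgmF.mul (hlammF s)).aestronglyMeasurable
    simp_rw [mul_sub]
    rw [integral_sub i1 i2,
      CTVR.pullout (hF_le (s - 1)) hgm hgb (hdAmF s hs) (hdAb s hs), sub_self]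
  -- cross terms vanish
  have cross : ∀ t ∈ I, ∀ s ∈ I, t < s → ∫ ω, T t ω * T s ω ∂μ = 0 := by
    intro t ht s hs hts
    have ht1 : 1 ≤ t := (Finset.mem_Icc.mp ht).1
    have hle1 : F t ≤ F (s - 1) := hF_mono (by omega)
    have hle2 : F (t - 1) ≤ F (s - 1) := hF_mono (by omega)
    have hgm : Measurable[F (s - 1)] (fun ω => T t ω * f s ω) :=
      (((hfm t ht).mono hle2 le_rfl).mul
        (((hdA_meas t ht).mono hle1 le_rfl).sub ((hlamm t).mono hle2 le_rfl))).mul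
        (hfm s hs)
    have hgb : CTVR.AEBdd μ (fun ω => T t ω * f s ω) := (hTb t ht).mul (hfb s hs)
    calc ∫ ω, T t ω * T s ω ∂μ
        = ∫ ω, (T t ω * f s ω) * (dA s ω - (μ[dA s | F (s - 1)]) ω) ∂μ := by
          apply integral_congr_ae
          filter_upwards with ω
          simp only [hT]; ring
      _ = 0 := key s hs _ hgm hgb
  -- diagonal identity : E[D · T t] = E[(T t)²]
  have diag : ∀ t ∈ I, ∫ ω, D ω * T t ω ∂μ = ∫ ω, (T t ω) ^ 2 ∂μ := by
    intro t ht
    have hm := hF_le (t - 1)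
    -- integrabilities
    have iDdA : Integrable (fun ω => D ω * dA t ω) μ :=
      (hDdAb t ht).integrable (hD_meas.mul (hdAmF t ht)).aestronglyMeasurable
    have iDdA' : Integrable (fun ω => D ω * (1 - dA t ω)) μ :=
      (hDdAb' t ht).integrable
        (hD_meas.mul (measurable_const.sub (hdAmF t ht))).aestronglyMeasurable
    have ifDdA : Integrable (fun ω => f t ω * (D ω * dA t ω)) μ :=
      ((hfb t ht).mul (hDdAb t ht)).integrable
        ((hfmF t ht).mul (hD_meas.mul (hdAmF t ht))).aestronglyMeasurable
    have iflD : Integrable (fun ω => (f t ω * (μ[dA t | F (t - 1)]) ω) * D ω) μ :=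
      (((hfb t ht).mul (hlamb t ht)).mul hDb).integrable
        (((hfmF t ht).mul (hlammF t)).mul hD_meas).aestronglyMeasurable
    -- step 1 : LHS = ∫ f·(D·dA) − ∫ (f·λ)·D
    have step1 : ∫ ω, D ω * T t ω ∂μ
        = ∫ ω, f t ω * (D ω * dA t ω) ∂μ
          - ∫ ω, (f t ω * (μ[dA t | F (t - 1)]) ω) * D ω ∂μ := by
      rw [← integral_sub ifDdA iflD]
      apply integral_congr_ae
      filter_upwards with ω
      simp only [hT]; ring
    -- pull-outs
    have p1 : ∫ ω, f t ω * (D ω * dA t ω) ∂μ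
        = ∫ ω, f t ω * (μ[(fun ω' => D ω' * dA t ω') | F (t - 1)]) ω ∂μ :=
      CTVR.pullout hm (hfm t ht) (hfb t ht)
        (hD_meas.mul (hdAmF t ht)) (hDdAb t ht)
    have p2 : ∫ ω, (f t ω * (μ[dA t | F (t - 1)]) ω) * D ω ∂μ
        = ∫ ω, (f t ω * (μ[dA t | F (t - 1)]) ω) * (μ[D | F (t - 1)]) ω ∂μ :=
      CTVR.pullout hm ((hfm t ht).mul (hlamm t)) ((hfb t ht).mul (hlamb t ht))
        hD_meas hDb
    -- conditional expectation of D splits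
    have hAB : (μ[D | F (t - 1)]) =ᵐ[μ]
        fun ω => (μ[(fun ω' => D ω' * dA t ω') | F (t - 1)]) ω
          + (μ[(fun ω' => D ω' * (1 - dA t ω')) | F (t - 1)]) ω := by
      have hsplit : D = (fun ω' => D ω' * dA t ω') + (fun ω' => D ω' * (1 - dA t ω')) := by
        funext ω; simp only [Pi.add_apply]; ring
      calc (μ[D | F (t - 1)])
          = μ[(fun ω' => D ω' * dA t ω') + (fun ω' => D ω' * (1 - dA t ω')) | F (t - 1)] := by
            rw [← hsplit]
        _ =ᵐ[μ] _ := by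
            filter_upwards [condExp_add (μ := μ) (m := F (t - 1)) iDdA iDdA'] with ω hω
            simpa using hω
    have p2' : ∫ ω, (f t ω * (μ[dA t | F (t - 1)]) ω) * (μ[D | F (t - 1)]) ω ∂μ
        = ∫ ω, (f t ω * (μ[dA t | F (t - 1)]) ω)
            * ((μ[(fun ω' => D ω' * dA t ω') | F (t - 1)]) ω
              + (μ[(fun ω' => D ω' * (1 - dA t ω')) | F (t - 1)]) ω) ∂μ := by
      apply integral_congr_ae
      filter_upwards [hAB] with ω hω
      rw [hω]
    -- step 2 : RHS via dA² = dA and pull-out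
    have hdAsq : ∀ ω, dA t ω * dA t ω = dA t ω := fun ω => by
      rcases hdA01 t ht ω with h | h <;> simp [h]
    have hg2m : Measurable[F (t - 1)]
        (fun ω => f t ω ^ 2 * (1 - 2 * (μ[dA t | F (t - 1)]) ω)) :=
      ((hfm t ht).pow_const 2).mul (measurable_const.sub (measurable_const.mul (hlamm t)))
    have hg2b : CTVR.AEBdd μ (fun ω => f t ω ^ 2 * (1 - 2 * (μ[dA t | F (t - 1)]) ω)) := by
      have h1 : CTVR.AEBdd μ (fun ω => f t ω ^ 2) := by
        have := (hfb t ht).mul (hfb t ht)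
        simpa [pow_two] using this
      exact h1.mul ((CTVR.AEBdd.const 1).sub
        ((CTVR.AEBdd.const 2).mul (hlamb t ht)))
    have ig1 : Integrable
        (fun ω => (f t ω ^ 2 * (1 - 2 * (μ[dA t | F (t - 1)]) ω)) * dA t ω) μ :=
      (hg2b.mul (hdAb t ht)).integrable
        (((hg2m.mono hm le_rfl)).mul (hdAmF t ht)).aestronglyMeasurable
    have ig2 : Integrable
        (fun ω => f t ω ^ 2 * (μ[dA t | F (t - 1)]) ω ^ 2) μ := by
      have hb : CTVR.AEBdd μ (fun ω => f t ω ^ 2 * (μ[dA t | F (t - 1)]) ω ^ 2) := by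
        have := ((hfb t ht).mul (hfb t ht)).mul ((hlamb t ht).mul (hlamb t ht))
        refine (this.imp ?_)
        rintro Cx ⟨h0, hx⟩
        exact ⟨h0, by filter_upwards [hx] with ω hω; convert hω using 2; ring⟩
      exact hb.integrable
        (((hfmF t ht).pow_const 2).mul ((hlammF t).pow_const 2)).aestronglyMeasurable
    have step2 : ∫ ω, (T t ω) ^ 2 ∂μ
        = ∫ ω, (f t ω ^ 2 * (1 - 2 * (μ[dA t | F (t - 1)]) ω)) * dA t ω ∂μ
          + ∫ ω, f t ω ^ 2 * (μ[dA t | F (t - 1)]) ω ^ 2 ∂μ := by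
      rw [← integral_add ig1 ig2]
      apply integral_congr_ae
      filter_upwards with ω
      simp only [hT]
      linear_combination (f t ω) ^ 2 * hdAsq ω
    have p3 : ∫ ω, (f t ω ^ 2 * (1 - 2 * (μ[dA t | F (t - 1)]) ω)) * dA t ω ∂μ
        = ∫ ω, (f t ω ^ 2 * (1 - 2 * (μ[dA t | F (t - 1)]) ω))
            * (μ[dA t | F (t - 1)]) ω ∂μ :=
      CTVR.pullout hm hg2m hg2b (hdAmF t ht) (hdAb t ht)
    -- recombine both sides into single integrals and compare a.e.
    have ifA : Integrable
        (fun ω => f t ω * (μ[(fun ω' => D ω' * dA t ω') | F (t - 1)]) ω) μ :=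
      ((hfb t ht).mul (hAb t ht)).integrable
        ((hfmF t ht).mul ((hAm t).mono hm le_rfl)).aestronglyMeasurable
    have iflAB : Integrable
        (fun ω => (f t ω * (μ[dA t | F (t - 1)]) ω)
          * ((μ[(fun ω' => D ω' * dA t ω') | F (t - 1)]) ω
            + (μ[(fun ω' => D ω' * (1 - dA t ω')) | F (t - 1)]) ω)) μ := by
      have hb := ((hfb t ht).mul (hlamb t ht)).mul
        (CTVR.AEBdd.sum (μ := μ) {0, 1}
          (g := fun i => if i = 0 then μ[(fun ω' => D ω' * dA t ω') | F (t - 1)]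
            else μ[(fun ω' => D ω' * (1 - dA t ω')) | F (t - 1)])
          (by rintro i hi; fin_cases hi <;> simp [hAb t ht, hBb t ht]))
      refine Integrable.congr (hb.integrable ?_) ?_
      · exact (((hfmF t ht).mul (hlammF t)).mul
          ((((hAm t).mono hm le_rfl)).add (((hBm t).mono hm le_rfl))) |>.aestronglyMeasurable).congr
          (by
            filter_upwards with ω
            simp)
      · filter_upwards with ω
        simp
    have ig3 : Integrable
        (fun ω => (f t ω ^ 2 * (1 - 2 * (μ[dA t | F (t - 1)]) ω))
          * (μ[dA t | F (t - 1)]) ω) μ :=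
      (hg2b.mul (hlamb t ht)).integrable
        ((hg2m.mono hm le_rfl).mul (hlammF t)).aestronglyMeasurable
    rw [step1, p1, p2, p2', step2, p3, ← integral_sub ifA iflAB, ← integral_add ig3 ig2]
    apply integral_congr_ae
    filter_upwards [hlam t ht] with ω hω
    obtain ⟨h1, h2⟩ := hω
    have hl0 : (μ[dA t | F (t - 1)]) ω ≠ 0 := (lt_of_lt_of_le hc h1).ne'
    have hl1 : 1 - (μ[dA t | F (t - 1)]) ω ≠ 0 := by
      have : 0 < 1 - (μ[dA t | F (t - 1)]) ω := by linarith
      exact this.ne'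
    have hkey : f t ω * ((μ[dA t | F (t - 1)]) ω * (1 - (μ[dA t | F (t - 1)]) ω))
        = (μ[(fun ω' => D ω' * dA t ω') | F (t - 1)]) ω * (1 - (μ[dA t | F (t - 1)]) ω)
          - (μ[(fun ω' => D ω' * (1 - dA t ω')) | F (t - 1)]) ω
            * (μ[dA t | F (t - 1)]) ω := by
      rw [hf t ht ω]
      field_simp
    linear_combination (-(f t ω)) * hkey
  -- integrability of S and related objects
  have hSmeas : Measurable S := by
    rw [funext hS]
    exact Finset.measurable_sum I fun t ht =>
      (hfmF t ht).mul ((hdAmF t ht).sub (hlammF t))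
  have hSb : CTVR.AEBdd μ S := by
    have := CTVR.AEBdd.sum (μ := μ) I (g := T) hTb
    refine this.imp ?_
    rintro Cx ⟨h0, hx⟩
    exact ⟨h0, by filter_upwards [hx] with ω hω; rw [hS ω]; exact hω⟩
  have hSint : Integrable S μ := hSb.integrable hSmeas.aestronglyMeasurable
  have hDint : Integrable D μ := hDb.integrable hD_meas.aestronglyMeasurable
  -- (i) E[S] = 0
  have hTT : ∀ t ∈ I, ∀ s ∈ I, Integrable (fun ω => T t ω * T s ω) μ := fun t ht s hs =>
    ((hTb t ht).mul (hTb s hs)).integrable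
      ((hTm t ht).mul (hTm s hs)).aestronglyMeasurable
  have intS : ∫ ω, S ω ∂μ = 0 := by
    rw [funext hS]
    rw [integral_finset_sum I hTint]
    exact Finset.sum_eq_zero fun t ht => key t ht (f t) (hfm t ht) (hfb t ht)
  have intDss : ∫ ω, Dss ω ∂μ = ∫ ω, D ω ∂μ := by
    rw [funext hDss, integral_sub hDint hSint, intS, sub_zero]
  -- E[S²] = Σ_t E[(T t)²]
  have intS2 : ∫ ω, (S ω) ^ 2 ∂μ = ∑ t ∈ I, ∫ ω, (T t ω) ^ 2 ∂μ := by
    have e : ∀ ω, (S ω) ^ 2 = ∑ t ∈ I, ∑ s ∈ I, T t ω * T s ω := by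
      intro ω
      rw [hS ω, sq, Finset.sum_mul_sum]
    calc ∫ ω, (S ω) ^ 2 ∂μ = ∫ ω, ∑ t ∈ I, ∑ s ∈ I, T t ω * T s ω ∂μ := by
          apply integral_congr_ae; filter_upwards with ω; exact e ω
      _ = ∑ t ∈ I, ∫ ω, ∑ s ∈ I, T t ω * T s ω ∂μ :=
          integral_finset_sum I fun t ht =>
            integrable_finset_sum I fun s hs => hTT t ht s hs
      _ = ∑ t ∈ I, ∑ s ∈ I, ∫ ω, T t ω * T s ω ∂μ :=
          Finset.sum_congr rfl fun t ht =>
            integral_finset_sum I fun s hs => hTT t ht s hs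
      _ = ∑ t ∈ I, ∫ ω, (T t ω) ^ 2 ∂μ := by
          refine Finset.sum_congr rfl fun t ht => ?_
          rw [Finset.sum_eq_single_of_mem t ht]
          · apply integral_congr_ae; filter_upwards with ω; rw [sq]
          · intro s hs hst
            rcases lt_or_gt_of_ne hst with h | h
            · calc ∫ ω, T t ω * T s ω ∂μ = ∫ ω, T s ω * T t ω ∂μ := by
                    apply integral_congr_ae; filter_upwards with ω; rw [mul_comm]
                _ = 0 := cross s hs t ht h
            · exact cross t ht s hs h
  -- E[D·S] = E[S²]
  have intDS : ∫ ω, D ω * S ω ∂μ = ∫ ω, (S ω) ^ 2 ∂μ := by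
    have iDT : ∀ t ∈ I, Integrable (fun ω => D ω * T t ω) μ := fun t ht =>
      (hDb.mul (hTb t ht)).integrable (hD_meas.mul (hTm t ht)).aestronglyMeasurable
    calc ∫ ω, D ω * S ω ∂μ = ∫ ω, ∑ t ∈ I, D ω * T t ω ∂μ := by
          apply integral_congr_ae; filter_upwards with ω
          rw [hS ω, Finset.mul_sum]
      _ = ∑ t ∈ I, ∫ ω, D ω * T t ω ∂μ := integral_finset_sum I iDT
      _ = ∑ t ∈ I, ∫ ω, (T t ω) ^ 2 ∂μ := Finset.sum_congr rfl fun t ht => diag t ht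
      _ = ∫ ω, (S ω) ^ 2 ∂μ := intS2.symm
  -- integrability of squares
  have iD2 : Integrable (fun ω => (D ω) ^ 2) μ := by
    have hb : CTVR.AEBdd μ (fun ω => (D ω) ^ 2) := by
      have := hDb.mul hDb
      refine this.imp ?_
      rintro Cx ⟨h0, hx⟩
      exact ⟨h0, by filter_upwards [hx] with ω hω; rw [sq]; exact hω⟩
    exact hb.integrable (hD_meas.pow_const 2).aestronglyMeasurable
  have iS2 : Integrable (fun ω => (S ω) ^ 2) μ := by
    have hb : CTVR.AEBdd μ (fun ω => (S ω) ^ 2) := by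
      have := hSb.mul hSb
      refine this.imp ?_
      rintro Cx ⟨h0, hx⟩
      exact ⟨h0, by filter_upwards [hx] with ω hω; rw [sq]; exact hω⟩
    exact hb.integrable (hSmeas.pow_const 2).aestronglyMeasurable
  have iDS : Integrable (fun ω => D ω * S ω) μ :=
    (hDb.mul hSb).integrable (hD_meas.mul hSmeas).aestronglyMeasurable
  have i2DS : Integrable (fun ω => 2 * (D ω * S ω)) μ := iDS.const_mul 2
  -- (ii) E[Dss²] = E[D²] − E[S²]
  have intDss2 : ∫ ω, (Dss ω) ^ 2 ∂μ = ∫ ω, (D ω) ^ 2 ∂μ - ∫ ω, (S ω) ^ 2 ∂μ := by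
    have e : ∫ ω, (Dss ω) ^ 2 ∂μ
        = ∫ ω, ((D ω) ^ 2 - 2 * (D ω * S ω) + (S ω) ^ 2) ∂μ := by
      apply integral_congr_ae; filter_upwards with ω
      rw [hDss ω]; ring
    have iDsub : Integrable (fun ω => (D ω) ^ 2 - 2 * (D ω * S ω)) μ := iD2.sub i2DS
    rw [e, integral_add iDsub iS2, integral_sub iD2 i2DS,
      integral_const_mul, intDS]
    ring
  -- (iii) variance inequality
  have hDssMeas : Measurable Dss := by
    rw [funext hDss]; exact hD_meas.sub hSmeas
  have hDssb : CTVR.AEBdd μ Dss := by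
    have := hDb.sub hSb
    refine this.imp ?_
    rintro Cx ⟨h0, hx⟩
    exact ⟨h0, by filter_upwards [hx] with ω hω; rw [hDss ω]; exact hω⟩
  have hmD : MemLp D 2 μ := CTVR.AEBdd.memℒp hD_meas.aestronglyMeasurable hDb 2
  have hmDss : MemLp Dss 2 μ := CTVR.AEBdd.memℒp hDssMeas.aestronglyMeasurable hDssb 2
  have hvD : variance D μ = ∫ ω, (D ω) ^ 2 ∂μ - (∫ ω, D ω ∂μ) ^ 2 := by
    rw [variance_eq_sub hmD]; rfl
  have hvDss : variance Dss μ = ∫ ω, (Dss ω) ^ 2 ∂μ - (∫ ω, Dss ω ∂μ) ^ 2 := by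
    rw [variance_eq_sub hmDss]; rfl
  have hS2nonneg : 0 ≤ ∫ ω, (S ω) ^ 2 ∂μ := integral_nonneg fun ω => sq_nonneg _
  refine ⟨⟨intS, intDss⟩, intDss2, ?_⟩
  rw [hvD, hvDss, intDss2, intDss]
  linarith
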